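/- Let G be a graph, X_1, X_2, X_3, X* four pairwise disjoint cliques with |X_1| > ⌈ω(G)/4⌉, |X_2| ≤ (3/4)ω(G), |X_3| = ⌈ω(G)/4⌉, such that X_1 ∪ X* is anticomplete to X_3, every two vertices in X_1 ∪ X* have comparable neighborhoods in X_2, and for every v ∈ X* and u ∈ X_1 we have N_{X_2}(v) ⊆ N_{X_2}(u). Let P ⊆ X_1 be the set of p vertices of X_1 with largest neighborhoods in X_2, where 1 ≤ p ≤ ⌈ω(G)/4⌉, and let F be an induced subgraph of G with V(F) ∩ P = ∅. If v ∈ V(F) ∩ X_2 satisfies N_F(v) ⊆ X_1 ∪ X_2 ∪ X_3 ∪ X* and N(v) ∩ (X_1 ∪ X_2 ∪ X*) is a clique of G, then the degree of v in F is less than ⌈(5/4)ω(G)⌉ − p. -/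

import Mathlib

open SimpleGraph

theorem stmt_19 {V : Type*} [Fintype V] [DecidableEq V] (G : SimpleGraph V)
    (X₁ X₂ X₃ Xstar : Finset V) (p : ℕ)
    -- four pairwise disjoint cliques
    (hd12 : Disjoint X₁ X₂) (hd13 : Disjoint X₁ X₃) (hd1s : Disjoint X₁ Xstar)
    (hd23 : Disjoint X₂ X₃) (hd2s : Disjoint X₂ Xstar) (hd3s : Disjoint X₃ Xstar)
    (hcl1 : G.IsClique (X₁ : Set V)) (hcl2 : G.IsClique (X₂ : Set V))
    (hcl3 : G.IsClique (X₃ : Set V)) (hcls : G.IsClique (Xstar : Set V))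
    -- size conditions
    (hX1 : ⌈(G.cliqueNum : ℚ) / 4⌉₊ < X₁.card)
    (hX2 : (X₂.card : ℚ) ≤ 3 / 4 * G.cliqueNum)
    (hX3 : X₃.card = ⌈(G.cliqueNum : ℚ) / 4⌉₊)
    -- `X₁ ∪ X*` is anticomplete to `X₃`
    (hanti : ∀ x ∈ X₁ ∪ Xstar, ∀ y ∈ X₃, ¬ G.Adj x y)
    -- any two vertices of `X₁ ∪ X*` have comparable neighborhoods in `X₂`
    (hcomp : ∀ x ∈ X₁ ∪ Xstar, ∀ y ∈ X₁ ∪ Xstar,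
      (X₂ : Set V) ∩ G.neighborSet x ⊆ (X₂ : Set V) ∩ G.neighborSet y ∨
      (X₂ : Set V) ∩ G.neighborSet y ⊆ (X₂ : Set V) ∩ G.neighborSet x)
    -- neighborhoods in `X₂` of vertices of `X*` are below those of vertices of `X₁`
    (hstar : ∀ v ∈ Xstar, ∀ u ∈ X₁,
      (X₂ : Set V) ∩ G.neighborSet v ⊆ (X₂ : Set V) ∩ G.neighborSet u)
    -- `P` consists of `p` vertices of `X₁` with largest neighborhoods in `X₂`
    (P : Finset V) (hP : P ⊆ X₁) (hPcard : P.card = p)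
    (hp1 : 1 ≤ p) (hp2 : p ≤ ⌈(G.cliqueNum : ℚ) / 4⌉₊)
    (hPmax : ∀ x ∈ P, ∀ y ∈ X₁ \ P,
      (X₂ : Set V) ∩ G.neighborSet y ⊆ (X₂ : Set V) ∩ G.neighborSet x)
    -- `F` is an induced subgraph of `G` avoiding `P`, identified with its vertex set
    (F : Set V) (hFP : Disjoint F (P : Set V))
    -- `v ∈ V(F) ∩ X₂` with `N_F(v) ⊆ X₁ ∪ X₂ ∪ X₃ ∪ X*`
    (v : V) (hvF : v ∈ F) (hvX2 : v ∈ X₂)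
    (hNF : ∀ w ∈ F, G.Adj v w → w ∈ X₁ ∪ X₂ ∪ X₃ ∪ Xstar)
    -- `N(v) ∩ (X₁ ∪ X₂ ∪ X*)` is a clique of `G`
    (hclN : G.IsClique (G.neighborSet v ∩ ((X₁ ∪ X₂ ∪ Xstar : Finset V) : Set V))) :
    -- the degree of `v` in `F` is less than `⌈(5/4) ω(G)⌉ - p`
    {w : V | w ∈ F ∧ G.Adj v w}.ncard + p < ⌈(5 / 4 : ℚ) * G.cliqueNum⌉₊ := by
  classical
  set ω := G.cliqueNum with hω
  set c := ⌈(ω : ℚ) / 4⌉₊ with hc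
  -- rewrite the target ceiling
  have hceil : ⌈(5 / 4 : ℚ) * ω⌉₊ = ω + c := by
    have : (5 / 4 : ℚ) * ω = (ω : ℚ) / 4 + (ω : ℕ) := by push_cast; ring
    rw [this, Nat.ceil_add_natCast (by positivity), Nat.add_comm]
  rw [hceil]
  -- split neighbors of v in F
  set A : Finset V := (X₁ ∪ X₂ ∪ Xstar).filter (fun w => w ∈ F ∧ G.Adj v w) with hA
  set B : Finset V := X₃.filter (fun w => w ∈ F ∧ G.Adj v w) with hB
  have hsub : {w : V | w ∈ F ∧ G.Adj v w} ⊆ ((A ∪ B : Finset V) : Set V) := by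
    intro w hw
    have hw' := hNF w hw.1 hw.2
    simp only [Finset.mem_union] at hw'
    simp only [Finset.coe_union, Set.mem_union, hA, hB, Finset.coe_filter,
      Set.mem_setOf_eq, Finset.mem_union]
    rcases hw' with ((h | h) | h) | h
    · exact Or.inl ⟨Or.inl (Or.inl h), hw.1, hw.2⟩
    · exact Or.inl ⟨Or.inl (Or.inr h), hw.1, hw.2⟩
    · exact Or.inr ⟨h, hw.1, hw.2⟩
    · exact Or.inl ⟨Or.inr h, hw.1, hw.2⟩
  have hncard : {w : V | w ∈ F ∧ G.Adj v w}.ncard ≤ A.card + B.card := by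
    calc {w : V | w ∈ F ∧ G.Adj v w}.ncard
        ≤ ((A ∪ B : Finset V) : Set V).ncard :=
          Set.ncard_le_ncard hsub (Set.toFinite _)
      _ = (A ∪ B).card := Set.ncard_coe_finset _
      _ ≤ A.card + B.card := Finset.card_union_le _ _
  have hBcard : B.card ≤ c := by
    calc B.card ≤ X₃.card := Finset.card_filter_le _ _
      _ = c := hX3
  -- c < ω/4 + 1 and X₂.card + c ≤ ω
  have hωpos : 1 ≤ ω := by
    have : G.IsClique ({v} : Finset V) := by simp
    have := IsClique.card_le_cliqueNum (G := G) (t := {v}) (tc := this)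
    simpa using this
  have hX2c : X₂.card + c ≤ ω := by
    have h1 : X₂.card ≤ ω := by
      have : (X₂.card : ℚ) ≤ (ω : ℚ) := by
        calc (X₂.card : ℚ) ≤ 3 / 4 * ω := hX2
          _ ≤ ω := by nlinarith [Nat.cast_nonneg (α := ℚ) ω]
      exact_mod_cast this
    have h2 : c ≤ ω - X₂.card := by
      rw [hc, Nat.ceil_le]
      have : ((ω - X₂.card : ℕ) : ℚ) = (ω : ℚ) - X₂.card := by
        push_cast [h1]; ring
      rw [this]
      linarith [hX2]
    omega
  -- A is a subset of the clique neighborhood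
  have hAclN : (A : Set V) ⊆ G.neighborSet v ∩ ((X₁ ∪ X₂ ∪ Xstar : Finset V) : Set V) := by
    intro w hw
    simp only [hA, Finset.coe_filter, Set.mem_setOf_eq] at hw
    exact ⟨hw.2.2, by simpa using hw.1⟩
  have hvX2' : v ∈ (X₁ ∪ X₂ ∪ Xstar : Finset V) := by
    simp [hvX2]
  -- v not in A (no self-adjacency)
  have hvA : v ∉ A := by
    simp only [hA, Finset.mem_filter]
    rintro ⟨-, -, h⟩
    exact G.loopless.irrefl v h
  -- case split: does v have an F-neighbor in X₁ ∪ Xstar?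
  by_cases hcase : ∃ w ∈ X₁ ∪ Xstar, w ∈ F ∧ G.Adj v w
  · -- Case B: extend the clique by P
    obtain ⟨w, hw1s, hwF, hwadj⟩ := hcase
    -- every x ∈ P is adjacent to v
    have hPadj : ∀ x ∈ P, G.Adj v x := by
      intro x hx
      have hvNw : v ∈ (X₂ : Set V) ∩ G.neighborSet w :=
        ⟨by simpa using hvX2, hwadj.symm⟩
      have hvNx : v ∈ (X₂ : Set V) ∩ G.neighborSet x := by
        rcases Finset.mem_union.mp hw1s with h1 | hs
        · have hwP : w ∉ P := fun hwP => (hFP.le_bot ⟨hwF, hwP⟩)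
          exact hPmax x hx w (Finset.mem_sdiff.mpr ⟨h1, hwP⟩) hvNw
        · exact hstar w hs x (hP hx) hvNw
      exact hvNx.2.symm.symm |>.symm
    -- P is inside the clique neighborhood
    have hPclN : (P : Set V) ⊆ G.neighborSet v ∩ ((X₁ ∪ X₂ ∪ Xstar : Finset V) : Set V) := by
      intro x hx
      refine ⟨hPadj x hx, ?_⟩
      simp only [Finset.coe_union, Set.mem_union, Finset.mem_coe]
      exact Or.inl (Or.inl (hP hx))
    -- the big clique
    have hAP : G.IsClique ((A ∪ P : Finset V) : Set V) := by
      apply hclN.subset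
      rw [Finset.coe_union]
      exact Set.union_subset hAclN hPclN
    have hins : G.IsClique (insert v ((A ∪ P : Finset V) : Set V)) := by
      apply hAP.insert
      intro b hb _
      rcases Finset.mem_union.mp (by exact_mod_cast hb) with hbA | hbP
      · exact ((hAclN hbA).1 : G.Adj v b)
      · exact hPadj b hbP
    have hbig : (insert v (A ∪ P)).card ≤ ω := by
      have := IsClique.card_le_cliqueNum (G := G) (t := insert v (A ∪ P))
        (tc := by simpa using hins)
      exact this
    have hvP : v ∉ P := fun h => (Finset.disjoint_left.mp hd12 (hP h)) hvX2
    have hdisjAP : Disjoint A P := by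
      rw [Finset.disjoint_left]
      intro a ha haP
      have haF : a ∈ F := by
        simp only [hA, Finset.mem_filter] at ha
        exact ha.2.1
      exact hFP.le_bot ⟨haF, haP⟩
    have hcardins : (insert v (A ∪ P)).card = A.card + p + 1 := by
      rw [Finset.card_insert_of_notMem (by
        simp only [Finset.mem_union, not_or]
        exact ⟨hvA, hvP⟩), Finset.card_union_of_disjoint hdisjAP, hPcard]
    have hAp : A.card + p + 1 ≤ ω := hcardins ▸ hbig
    calc {w : V | w ∈ F ∧ G.Adj v w}.ncard + p ≤ A.card + B.card + p := by omega
      _ ≤ A.card + c + p := by omega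
      _ < ω + c := by omega
  ·
    push_neg at hcase
    have hAX2 : A ⊆ X₂.erase v := by
      intro a ha
      simp only [hA, Finset.mem_filter, Finset.mem_union] at ha
      obtain ⟨hmem, haF, haadj⟩ := ha
      have haX2 : a ∈ X₂ := by
        rcases hmem with (h1 | h2) | hs
        · exact absurd haadj (hcase a (Finset.mem_union.mpr (Or.inl h1)) haF)
        · exact h2
        · exact absurd haadj (hcase a (Finset.mem_union.mpr (Or.inr hs)) haF)
      exact Finset.mem_erase.mpr ⟨fun h => G.loopless.irrefl v (h ▸ haadj), haX2⟩
    have hAcard : A.card ≤ X₂.card - 1 := by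
      have := Finset.card_le_card hAX2
      have hv2 : 1 ≤ X₂.card := Finset.card_pos.mpr ⟨v, hvX2⟩
      rw [Finset.card_erase_of_mem hvX2] at this
      omega
    have hpc : p ≤ c := hp2
    have h1le : 1 ≤ X₂.card := Finset.card_pos.mpr ⟨v, hvX2⟩
    calc {w : V | w ∈ F ∧ G.Adj v w}.ncard + p ≤ A.card + B.card + p := by omega
      _ ≤ (X₂.card - 1) + c + c := by omega
      _ < ω + c := by omega
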